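/- Let Q = {(x,y,z) ∈ ℝ^3 : x ≥ 0, y ≥ 0, z ≥ 0, 6x + 10y + 15z ≤ 30}. Then the point (4,2,1) lies in the dilate 2Q but is not a sum of two integral points of Q; i.e., (4,2,1) ∈ 2Q ∩ ℤ^3 but (4,2,1) ∉ (Q ∩ ℤ^3) + (Q ∩ ℤ^3). Hence Q is not integrally closed. -/

import Mathlib

open Pointwise MeasureTheory

/-- `Mn n` is the set of exponent vectors `α ∈ ℕ^{π(n)}` (indexed by the primes
`p_1 < ... < p_{π(n)}` at most `n`, where `p_j = Nat.nth Nat.Prime (j-1)`)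
with `∏ j, p_j ^ α_j ≤ n`. -/
def Mn (n : ℕ) : Set (Fin (Nat.primeCounting n) → ℕ) :=
  {α | ∏ j : Fin (Nat.primeCounting n), (Nat.nth Nat.Prime (j : ℕ)) ^ (α j) ≤ n}

/-- `ksum k A` is the `k`-fold sumset `{a_1 + ... + a_k : a_i ∈ A}`. -/
def ksum {V : Type*} [AddCommMonoid V] (k : ℕ) (A : Set V) : Set V :=
  {x | ∃ f : Fin k → V, (∀ i, f i ∈ A) ∧ ∑ i, f i = x}

/-- `Pset k n` is the set of products of `k` factors from `{1, ..., n}`. -/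
def Pset (k n : ℕ) : Set ℕ :=
  {m | ∃ l : Fin n → ℕ, (∑ j, l j) = k ∧ ∏ j : Fin n, ((j : ℕ) + 1) ^ (l j) = m}

/-- `Qn n` is the convex hull of `Mn n` in `ℝ^{π(n)}`. -/
def Qn (n : ℕ) : Set (Fin (Nat.primeCounting n) → ℝ) :=
  convexHull ℝ
    ((fun (α : Fin (Nat.primeCounting n) → ℕ) (j : Fin (Nat.primeCounting n)) => (α j : ℝ)) ''
      Mn n)

/-- The simplex `{(x,y,z) ∈ ℝ³ : x,y,z ≥ 0, 6x + 10y + 15z ≤ 30}`. -/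
def Q3 : Set (Fin 3 → ℝ) :=
  {x | 0 ≤ x 0 ∧ 0 ≤ x 1 ∧ 0 ≤ x 2 ∧ 6 * x 0 + 10 * x 1 + 15 * x 2 ≤ 30}

theorem stmt6 :
    (![4, 2, 1] : Fin 3 → ℝ) ∈ (2 : ℝ) • Q3 ∧
    ¬ ∃ a b : Fin 3 → ℤ, (fun j => (a j : ℝ)) ∈ Q3 ∧ (fun j => (b j : ℝ)) ∈ Q3 ∧
        a + b = ![4, 2, 1] := by
  constructor
  · refine ⟨![2, 1, 1/2], ⟨by norm_num, by norm_num, by norm_num [Matrix.cons_val_two, Matrix.vecHead, Matrix.vecTail], by norm_num [Matrix.cons_val_two, Matrix.vecHead, Matrix.vecTail]⟩, ?_⟩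
    funext j
    fin_cases j <;> simp <;> norm_num
  · rintro ⟨a, b, ⟨ha0, ha1, ha2, ha3⟩, ⟨hb0, hb1, hb2, hb3⟩, hab⟩
    have e0 := congrFun hab 0
    have e1 := congrFun hab 1
    have e2 := congrFun hab 2
    simp [Pi.add_apply] at e0 e1 e2
    beta_reduce at ha0 ha1 ha2 ha3 hb0 hb1 hb2 hb3
    have ia0 : (0:ℤ) ≤ a 0 := by exact_mod_cast ha0
    have ia1 : (0:ℤ) ≤ a 1 := by exact_mod_cast ha1
    have ia2 : (0:ℤ) ≤ a 2 := by exact_mod_cast ha2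
    have ia3 : 6 * a 0 + 10 * a 1 + 15 * a 2 ≤ 30 := by exact_mod_cast ha3
    have ib0 : (0:ℤ) ≤ b 0 := by exact_mod_cast hb0
    have ib1 : (0:ℤ) ≤ b 1 := by exact_mod_cast hb1
    have ib2 : (0:ℤ) ≤ b 2 := by exact_mod_cast hb2
    have ib3 : 6 * b 0 + 10 * b 1 + 15 * b 2 ≤ 30 := by exact_mod_cast hb3
    have h2 : a 2 = 0 ∨ a 2 = 1 := by omega
    have h1 : a 1 = 0 ∨ a 1 = 1 ∨ a 1 = 2 := by omega
    rcases h2 with h2 | h2 <;> rcases h1 with h1 | h1 | h1 <;> omega
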